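/- Let H, F, J be graphs, let k, ℓ be positive integers with ℓ ≥ k, and let W be a graphon. If t_H(W) ≥ t_J(W)^ℓ / t_F(W)^{k-1} and t_H(1-W) ≥ t_J(1-W)^ℓ / t_F(1-W)^{k-1}, then m_H(W) ≥ 2^{k-ℓ} · m_J(W)^ℓ / m_F(W)^{k-1}. -/

import Mathlib

open MeasureTheory

/-- Homomorphism density of a finite simple graph `G` in a kernel
`W : [0,1]² → ℝ` (symmetrised, which agrees with the usual definition for
symmetric `W`). -/
noncomputable def homDensity {V : Type*} [Fintype V] [DecidableEq V]
    (G : SimpleGraph V) (W : unitInterval → unitInterval → ℝ) : ℝ :=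
  letI := Classical.decRel G.Adj
  ∫ x : V → unitInterval, ∏ e ∈ G.edgeFinset,
    Sym2.lift ⟨fun a b => (W (x a) (x b) + W (x b) (x a)) / 2, fun a b => by ring⟩ e

/-- `W` is a graphon: measurable, symmetric, with values in `[0,1]`. -/
def IsGraphon (W : unitInterval → unitInterval → ℝ) : Prop :=
  Measurable (fun p : unitInterval × unitInterval => W p.1 p.2) ∧
    (∀ x y, W x y = W y x) ∧ (∀ x y, 0 ≤ W x y) ∧ (∀ x y, W x y ≤ 1)

/-- The complementary graphon `1 - W`. -/
def compl' (W : unitInterval → unitInterval → ℝ) : unitInterval → unitInterval → ℝ :=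
  fun x y => 1 - W x y

lemma homDensity_nonneg {V : Type*} [Fintype V] [DecidableEq V]
    (G : SimpleGraph V) {W : unitInterval → unitInterval → ℝ}
    (h : ∀ x y, 0 ≤ W x y) : 0 ≤ homDensity G W := by
  unfold homDensity
  refine integral_nonneg fun x => ?_
  refine Finset.prod_nonneg fun e _ => ?_
  induction e using Sym2.inductionOn with
  | hf a b =>
    simp only [Sym2.lift_mk]
    have h1 := h (x a) (x b)
    have h2 := h (x b) (x a)
    linarith

private lemma key_ineq {a b c d : ℝ} (ha : 0 ≤ a) (hb : 0 ≤ b) (hc : 0 < c) (hd : 0 < d)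
    {k ℓ : ℕ} (hk : 1 ≤ k) (hkl : k ≤ ℓ) :
    (2 : ℝ) ^ ((k : ℤ) - ℓ) * (a + b) ^ ℓ / (c + d) ^ (k - 1) ≤
      a ^ ℓ / c ^ (k - 1) + b ^ ℓ / d ^ (k - 1) := by
  have hℓ : 0 < ℓ := lt_of_lt_of_le hk hkl
  have hℓR : (0 : ℝ) < (ℓ : ℝ) := by exact_mod_cast hℓ
  have hA : 0 ≤ a ^ ℓ / c ^ (k - 1) := by positivity
  have hB : 0 ≤ b ^ ℓ / d ^ (k - 1) := by positivity
  set A := a ^ ℓ / c ^ (k - 1) with hAdef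
  set B := b ^ ℓ / d ^ (k - 1) with hBdef
  have h2 : (2 : ℝ) ^ ((k : ℤ) - ℓ) = ((2 : ℝ) ^ (ℓ - k : ℕ))⁻¹ := by
    rw [← zpow_natCast (2 : ℝ) (ℓ - k), ← zpow_neg]
    congr 1
    omega
  have hcd : (0 : ℝ) < c + d := by positivity
  rw [h2, inv_mul_eq_div, div_div, div_le_iff₀ (by positivity)]
  -- goal : (a+b)^ℓ ≤ (A + B) * (2^(ℓ-k) * (c+d)^(k-1))
  rcases eq_or_lt_of_le (add_nonneg hA hB) with hS | hS
  · -- degenerate case: A + B = 0, hence a = b = 0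
    have hA0 : A = 0 := le_antisymm (by linarith) hA
    have ha0 : a = 0 := by
      have : a ^ ℓ = 0 := by
        have hcne : c ^ (k - 1) ≠ 0 := by positivity
        rw [hAdef] at hA0
        exact (div_eq_zero_iff.mp hA0).resolve_right hcne
      exact pow_eq_zero_iff hℓ.ne' |>.mp this
    have hB0 : B = 0 := by linarith
    have hb0 : b = 0 := by
      have : b ^ ℓ = 0 := by
        have hdne : d ^ (k - 1) ≠ 0 := by positivity
        rw [hBdef] at hB0
        exact (div_eq_zero_iff.mp hB0).resolve_right hdne
      exact pow_eq_zero_iff hℓ.ne' |>.mp this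
    rw [ha0, hb0, ← hS]
    simp [zero_pow hℓ.ne']
  · -- main case
    set w1 : ℝ := (ℓ : ℝ)⁻¹ with hw1def
    set w2 : ℝ := ((k : ℝ) - 1) * (ℓ : ℝ)⁻¹ with hw2def
    set w3 : ℝ := ((ℓ : ℝ) - (k : ℝ)) * (ℓ : ℝ)⁻¹ with hw3def
    have hkR : (1 : ℝ) ≤ (k : ℝ) := by exact_mod_cast hk
    have hklR : (k : ℝ) ≤ (ℓ : ℝ) := by exact_mod_cast hkl
    have hw1 : 0 ≤ w1 := by positivity
    have hw2 : 0 ≤ w2 := by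
      apply mul_nonneg (by linarith) (by positivity)
    have hw3 : 0 ≤ w3 := by
      apply mul_nonneg (by linarith) (by positivity)
    have hw : w1 + w2 + w3 = 1 := by
      rw [hw1def, hw2def, hw3def]
      field_simp
      ring
    have g1 := Real.geom_mean_le_arith_mean3_weighted hw1 hw2 hw3
      (div_nonneg hA hS.le) (div_nonneg hc.le hcd.le) (by norm_num : (0:ℝ) ≤ 1/2) hw
    have g2 := Real.geom_mean_le_arith_mean3_weighted hw1 hw2 hw3
      (div_nonneg hB hS.le) (div_nonneg hd.le hcd.le) (by norm_num : (0:ℝ) ≤ 1/2) hw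
    have gsum : (A / (A + B)) ^ w1 * (c / (c + d)) ^ w2 * ((1:ℝ)/2) ^ w3
        + (B / (A + B)) ^ w1 * (d / (c + d)) ^ w2 * ((1:ℝ)/2) ^ w3 ≤ 1 := by
      have e : w1 * (A / (A + B)) + w2 * (c / (c + d)) + w3 * (1/2)
          + (w1 * (B / (A + B)) + w2 * (d / (c + d)) + w3 * (1/2))
          = w1 * ((A + B) / (A + B)) + w2 * ((c + d) / (c + d)) + w3 := by ring
      have := add_le_add g1 g2
      rw [e, div_self hS.ne', div_self hcd.ne', mul_one, mul_one] at this
      linarith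
    set P : ℝ := (A + B) ^ w1 * (c + d) ^ w2 * (2:ℝ) ^ w3 with hPdef
    have hPpos : 0 < P := by positivity
    have hAc : A ^ w1 * c ^ w2 = a := by
      have hcw2 : (0 : ℝ) < c ^ w2 := Real.rpow_pos_of_pos hc _
      rw [hAdef, Real.div_rpow (by positivity) (by positivity),
        ← Real.rpow_natCast a ℓ, ← Real.rpow_natCast c (k - 1),
        ← Real.rpow_mul ha, ← Real.rpow_mul hc.le]
      have e1 : (ℓ : ℝ) * w1 = 1 := mul_inv_cancel₀ hℓR.ne'
      have e2 : ((k - 1 : ℕ) : ℝ) * w1 = w2 := by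
        rw [Nat.cast_sub hk]; push_cast; rw [hw2def, hw1def]
      rw [e1, e2, Real.rpow_one, div_mul_cancel₀ _ hcw2.ne']
    have hBd : B ^ w1 * d ^ w2 = b := by
      have hdw2 : (0 : ℝ) < d ^ w2 := Real.rpow_pos_of_pos hd _
      rw [hBdef, Real.div_rpow (by positivity) (by positivity),
        ← Real.rpow_natCast b ℓ, ← Real.rpow_natCast d (k - 1),
        ← Real.rpow_mul hb, ← Real.rpow_mul hd.le]
      have e1 : (ℓ : ℝ) * w1 = 1 := mul_inv_cancel₀ hℓR.ne'
      have e2 : ((k - 1 : ℕ) : ℝ) * w1 = w2 := by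
        rw [Nat.cast_sub hk]; push_cast; rw [hw2def, hw1def]
      rw [e1, e2, Real.rpow_one, div_mul_cancel₀ _ hdw2.ne']
    have key1 : (A / (A + B)) ^ w1 * (c / (c + d)) ^ w2 * ((1:ℝ)/2) ^ w3 * P = a := by
      rw [hPdef, show (A / (A + B)) ^ w1 * (c / (c + d)) ^ w2 * ((1:ℝ)/2) ^ w3
          * ((A + B) ^ w1 * (c + d) ^ w2 * (2:ℝ) ^ w3)
          = ((A / (A + B)) ^ w1 * (A + B) ^ w1) * ((c / (c + d)) ^ w2 * (c + d) ^ w2)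
            * (((1:ℝ)/2) ^ w3 * (2:ℝ) ^ w3) by ring,
        ← Real.mul_rpow (div_nonneg hA hS.le) hS.le,
        ← Real.mul_rpow (div_nonneg hc.le hcd.le) hcd.le,
        ← Real.mul_rpow (by norm_num) (by norm_num),
        div_mul_cancel₀ _ hS.ne', div_mul_cancel₀ _ hcd.ne']
      norm_num
      rw [hAc]
    have key2 : (B / (A + B)) ^ w1 * (d / (c + d)) ^ w2 * ((1:ℝ)/2) ^ w3 * P = b := by
      rw [hPdef, show (B / (A + B)) ^ w1 * (d / (c + d)) ^ w2 * ((1:ℝ)/2) ^ w3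
          * ((A + B) ^ w1 * (c + d) ^ w2 * (2:ℝ) ^ w3)
          = ((B / (A + B)) ^ w1 * (A + B) ^ w1) * ((d / (c + d)) ^ w2 * (c + d) ^ w2)
            * (((1:ℝ)/2) ^ w3 * (2:ℝ) ^ w3) by ring,
        ← Real.mul_rpow (div_nonneg hB hS.le) hS.le,
        ← Real.mul_rpow (div_nonneg hd.le hcd.le) hcd.le,
        ← Real.mul_rpow (by norm_num) (by norm_num),
        div_mul_cancel₀ _ hS.ne', div_mul_cancel₀ _ hcd.ne']
      norm_num
      rw [hBd]
    have hab : a + b ≤ P := by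
      have := mul_le_mul_of_nonneg_right gsum hPpos.le
      rw [add_mul, key1, key2, one_mul] at this
      exact this
    have hPpow : P ^ ℓ = (A + B) * ((2:ℝ) ^ (ℓ - k : ℕ) * (c + d) ^ (k - 1)) := by
      rw [hPdef, mul_pow, mul_pow,
        ← Real.rpow_natCast ((A + B) ^ w1) ℓ, ← Real.rpow_mul hS.le,
        ← Real.rpow_natCast ((c + d) ^ w2) ℓ, ← Real.rpow_mul hcd.le,
        ← Real.rpow_natCast ((2:ℝ) ^ w3) ℓ, ← Real.rpow_mul (by norm_num)]
      have e1 : w1 * (ℓ : ℝ) = 1 := inv_mul_cancel₀ hℓR.ne'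
      have e2 : w2 * (ℓ : ℝ) = ((k - 1 : ℕ) : ℝ) := by
        rw [Nat.cast_sub hk, hw2def]; push_cast; field_simp
      have e3 : w3 * (ℓ : ℝ) = ((ℓ - k : ℕ) : ℝ) := by
        rw [Nat.cast_sub hkl, hw3def]; push_cast; field_simp
      rw [e1, e2, e3, Real.rpow_one, Real.rpow_natCast, Real.rpow_natCast]
      ring
    calc (a + b) ^ ℓ ≤ P ^ ℓ := pow_le_pow_left₀ (add_nonneg ha hb) hab ℓ
      _ = (A + B) * ((2:ℝ) ^ (ℓ - k : ℕ) * (c + d) ^ (k - 1)) := hPpow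

/-- Lemma 2.3: if `t_H(W) ≥ t_J(W)^ℓ / t_F(W)^{k-1}` and the same inequality holds for
`1 - W`, then `m_H(W) ≥ 2^{k-ℓ} · m_J(W)^ℓ / m_F(W)^{k-1}`. -/
theorem holder_density_lemma {VH VF VJ : Type*}
    [Fintype VH] [DecidableEq VH] [Fintype VF] [DecidableEq VF]
    [Fintype VJ] [DecidableEq VJ]
    (H : SimpleGraph VH) (F : SimpleGraph VF) (J : SimpleGraph VJ)
    (k ℓ : ℕ) (hk : 1 ≤ k) (hkl : k ≤ ℓ)
    (W : unitInterval → unitInterval → ℝ) (hW : IsGraphon W)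
    (hFpos : 0 < homDensity F W) (hFpos' : 0 < homDensity F (compl' W))
    (h1 : homDensity J W ^ ℓ / homDensity F W ^ (k - 1) ≤ homDensity H W)
    (h2 : homDensity J (compl' W) ^ ℓ / homDensity F (compl' W) ^ (k - 1) ≤
      homDensity H (compl' W)) :
    (2 : ℝ) ^ ((k : ℤ) - ℓ) *
        (homDensity J W + homDensity J (compl' W)) ^ ℓ /
        (homDensity F W + homDensity F (compl' W)) ^ (k - 1) ≤
      homDensity H W + homDensity H (compl' W) := by
  have hWnn : ∀ x y, 0 ≤ W x y := hW.2.2.1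
  have hWnn' : ∀ x y, 0 ≤ compl' W x y := fun x y => by
    have := hW.2.2.2 x y
    simp only [compl']
    linarith
  have ha : 0 ≤ homDensity J W := homDensity_nonneg J hWnn
  have hb : 0 ≤ homDensity J (compl' W) := homDensity_nonneg J hWnn'
  exact (key_ineq ha hb hFpos hFpos' hk hkl).trans (add_le_add h1 h2)
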